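/- Let α < β < γ with relations D_α D_β = q_{βα} D_β D_α + x^{αβ}_β D_α − x^{αβ}_α D_β and similar for the other two pairs, and suppose the coefficients arise from a Diffusion-algebra ansatz g_{uv} with g_{uv} ≠ 0 for u < v, q_{vu} = g_{vu}/g_{uv}, x^{uv}_w = x_w/g_{uv}, and all of x_α, x_β, x_γ nonzero. If additionally all q-coefficients are nonzero (q_{βα} q_{γα} q_{γβ} ≠ 0), then the diamond condition on D_α D_β D_γ forces q_{βα} = q_{γα} = q_{γβ} = 1 and g_{αβ} = g_{αγ} = g_{βγ} (type A_I). -/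

import Mathlib

/- Free associative ℂ-algebra on three generators `D 0 = D_α`, `D 1 = D_β`, `D 2 = D_γ`
   (ordering α < β < γ).  We encode the quadratic relations in the generic form
     D_α D_β = q1 • D_β D_α + b1 • D_α - a1 • D_β
     D_α D_γ = q2 • D_γ D_α + c2 • D_α - a2 • D_γ
     D_β D_γ = q3 • D_γ D_β + c3 • D_β - b3 • D_γ
   used as rewriting rules replacing `D_i D_j` for `i < j`. -/
noncomputable def D (i : Fin 3) : FreeAlgebra ℂ (Fin 3) := FreeAlgebra.ι ℂ i

/-- The result of the complete reduction of `D 0 * D 1 * D 2` to ordered monomials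
obtained by first rewriting the leftmost pair `(D 0 * D 1)`. -/
noncomputable def leftRed (q1 q2 q3 a1 b1 a2 c2 b3 c3 : ℂ) : FreeAlgebra ℂ (Fin 3) :=
  (q1*q2*q3) • (D 2 * D 1 * D 0) + (q1*q2*c3 + q1*c2) • (D 1 * D 0)
  + (b1*q2 - q1*q2*b3) • (D 2 * D 0) + (-(q1*a2*q3) - a1*q3) • (D 2 * D 1)
  + (b1*c2) • D 0 + (-(q1*a2*c3) - a1*c3) • D 1
  + (q1*a2*b3 - b1*a2 + a1*b3) • D 2

/-- The result of the complete reduction of `D 0 * D 1 * D 2` to ordered monomials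
obtained by first rewriting the rightmost pair `(D 1 * D 2)`. -/
noncomputable def rightRed (q1 q2 q3 a1 b1 a2 c2 b3 c3 : ℂ) : FreeAlgebra ℂ (Fin 3) :=
  (q1*q2*q3) • (D 2 * D 1 * D 0) + (q3*c2*q1 + c3*q1) • (D 1 * D 0)
  + (q2*q3*b1 - b3*q2) • (D 2 * D 0) + (-(q3*a2) - q2*q3*a1) • (D 2 * D 1)
  + (q3*c2*b1 + c3*b1 - b3*c2) • D 0 + (-(q3*c2*a1) - c3*a1) • D 1
  + (b3*a2) • D 2

set_option maxHeartbeats 1000000 in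
theorem coeffs (q1 q2 q3 a1 b1 a2 c2 b3 c3 : ℂ)
    (h : leftRed q1 q2 q3 a1 b1 a2 c2 b3 c3 = rightRed q1 q2 q3 a1 b1 a2 c2 b3 c3) :
    (b1*c2 = q3*c2*b1 + c3*b1 - b3*c2) ∧
    (-(q1*a2*c3) - a1*c3 = -(q3*c2*a1) - c3*a1) ∧
    (q1*a2*b3 - b1*a2 + a1*b3 = b3*a2) ∧
    (q1*q2*c3 + q1*c2 = q3*c2*q1 + c3*q1) ∧
    (b1*q2 - q1*q2*b3 = q2*q3*b1 - b3*q2) ∧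
    (-(q1*a2*q3) - a1*q3 = -(q3*a2) - q2*q3*a1) := by
  rw [leftRed, rightRed] at h
  have e100 := congrArg (FreeAlgebra.lift ℂ (![1,0,0] : Fin 3 → ℂ)) h
  have e010 := congrArg (FreeAlgebra.lift ℂ (![0,1,0] : Fin 3 → ℂ)) h
  have e001 := congrArg (FreeAlgebra.lift ℂ (![0,0,1] : Fin 3 → ℂ)) h
  have e110 := congrArg (FreeAlgebra.lift ℂ (![1,1,0] : Fin 3 → ℂ)) h
  have e101 := congrArg (FreeAlgebra.lift ℂ (![1,0,1] : Fin 3 → ℂ)) h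
  have e011 := congrArg (FreeAlgebra.lift ℂ (![0,1,1] : Fin 3 → ℂ)) h
  simp only [D, FreeAlgebra.lift_ι_apply, map_add, map_smul, map_mul, Matrix.cons_val_zero,
    Matrix.cons_val_one, Matrix.head_cons, smul_eq_mul, mul_one, mul_zero, zero_mul, one_mul,
    add_zero, zero_add, Matrix.cons_val_two, Matrix.tail_cons] at e100 e010 e001 e110 e101 e011
  refine ⟨by linear_combination e100, by linear_combination e010, by linear_combination e001,
    by linear_combination e110 - e100 - e010, by linear_combination e101 - e100 - e001,
    by linear_combination e011 - e010 - e001⟩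


set_option maxHeartbeats 2000000 in
/-- Classification: with all x's nonzero and all q's = g_{vu}/g_{uv} nonzero,
the diamond condition on D_α D_β D_γ forces q_{βα} = q_{γα} = q_{γβ} = 1 and
g_{αβ} = g_{αγ} = g_{βγ} (the A_I family). -/
theorem diamond_forces_AI (gαβ gβα gαγ gγα gβγ gγβ : ℝ) (xα xβ xγ : ℂ)
    (h1 : gαβ ≠ 0) (h2 : gαγ ≠ 0) (h3 : gβγ ≠ 0)
    (h4 : gβα ≠ 0) (h5 : gγα ≠ 0) (h6 : gγβ ≠ 0)
    (hxα : xα ≠ 0) (hxβ : xβ ≠ 0) (hxγ : xγ ≠ 0)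
    (hdiamond :
      leftRed ((gβα/gαβ : ℝ):ℂ) ((gγα/gαγ : ℝ):ℂ) ((gγβ/gβγ : ℝ):ℂ)
          (xα/(gαβ:ℂ)) (xβ/(gαβ:ℂ)) (xα/(gαγ:ℂ)) (xγ/(gαγ:ℂ)) (xβ/(gβγ:ℂ)) (xγ/(gβγ:ℂ))
        = rightRed ((gβα/gαβ : ℝ):ℂ) ((gγα/gαγ : ℝ):ℂ) ((gγβ/gβγ : ℝ):ℂ)
          (xα/(gαβ:ℂ)) (xβ/(gαβ:ℂ)) (xα/(gαγ:ℂ)) (xγ/(gαγ:ℂ)) (xβ/(gβγ:ℂ)) (xγ/(gβγ:ℂ))) :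
    gβα = gαβ ∧ gγα = gαγ ∧ gγβ = gβγ ∧ gαβ = gαγ ∧ gαγ = gβγ := by
  have hA : (gαβ:ℂ) ≠ 0 := by exact_mod_cast h1
  have hB : (gαγ:ℂ) ≠ 0 := by exact_mod_cast h2
  have hC : (gβγ:ℂ) ≠ 0 := by exact_mod_cast h3
  have hP : (gβα:ℂ) ≠ 0 := by exact_mod_cast h4
  have hG : (gγα:ℂ) ≠ 0 := by exact_mod_cast h5
  have hT : (gγβ:ℂ) ≠ 0 := by exact_mod_cast h6
  obtain ⟨F1, F2, F3, F4, F5, F6⟩ := coeffs _ _ _ _ _ _ _ _ _ hdiamond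
  push_cast at F1 F2 F3 F4 F5 F6
  field_simp at F1 F2 F3 F4 F5 F6
  have k1 : (gβγ:ℂ) - ↑gγβ - ↑gαγ + ↑gαβ = 0 := by
    have h : (xβ * xγ * (gαβ:ℂ)^2 * (gαγ:ℂ)^2 * (gβγ:ℂ)^2) *
        ((gβγ:ℂ) - ↑gγβ - ↑gαγ + ↑gαβ) = 0 := by linear_combination (xβ * xγ * (gαβ:ℂ)^2 * (gαγ:ℂ)^2 * (gβγ:ℂ)^2) * F1
    exact (mul_eq_zero.1 h).resolve_left (by simp [hxβ, hxγ, hA, hB, hC])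
  have k2 : (gγβ:ℂ) - ↑gβα = 0 := by
    have h : (xα * xγ * (gαβ:ℂ)^3 * (gαγ:ℂ) * (gβγ:ℂ)^3) *
        ((gγβ:ℂ) - ↑gβα) = 0 := by linear_combination (xα * xγ * (gαβ:ℂ)^3 * (gαγ:ℂ) * (gβγ:ℂ)^3) * F2
    exact (mul_eq_zero.1 h).resolve_left (by simp [hxα, hxγ, hA, hB, hC])
  have k3 : (gβα:ℂ) + ↑gαγ - ↑gβγ - ↑gαβ = 0 := by
    have h : (xα * xβ * (gαβ:ℂ)^2 * (gαγ:ℂ)^2 * (gβγ:ℂ)^2) *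
        ((gβα:ℂ) + ↑gαγ - ↑gβγ - ↑gαβ) = 0 := by linear_combination (xα * xβ * (gαβ:ℂ)^2 * (gαγ:ℂ)^2 * (gβγ:ℂ)^2) * F3
    exact (mul_eq_zero.1 h).resolve_left (by simp [hxα, hxβ, hA, hB, hC])
  have k4 : (gγα:ℂ) + ↑gβγ - ↑gγβ - ↑gαγ = 0 := by
    have h : (xγ * ↑gβα * (gαβ:ℂ)^3 * (gαγ:ℂ)^2 * (gβγ:ℂ)^2) *
        ((gγα:ℂ) + ↑gβγ - ↑gγβ - ↑gαγ) = 0 := by linear_combination (xγ * ↑gβα * (gαβ:ℂ)^3 * (gαγ:ℂ)^2 * (gβγ:ℂ)^2) * F4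
    exact (mul_eq_zero.1 h).resolve_left (by simp [hxγ, hP, hA, hB, hC])
  have k5 : (gβγ:ℂ) - ↑gβα - ↑gγβ + ↑gαβ = 0 := by
    have h : (xβ * ↑gγα * (gαβ:ℂ)^2 * (gαγ:ℂ)^3 * (gβγ:ℂ)^2) *
        ((gβγ:ℂ) - ↑gβα - ↑gγβ + ↑gαβ) = 0 := by linear_combination (xβ * ↑gγα * (gαβ:ℂ)^2 * (gαγ:ℂ)^3 * (gβγ:ℂ)^2) * F5
    exact (mul_eq_zero.1 h).resolve_left (by simp [hxβ, hG, hA, hB, hC])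
  have k6 : (gβα:ℂ) + ↑gαγ - ↑gαβ - ↑gγα = 0 := by
    have h : (xα * ↑gγβ * (gαβ:ℂ)^2 * (gαγ:ℂ)^2 * (gβγ:ℂ)^3) *
        ((gβα:ℂ) + ↑gαγ - ↑gαβ - ↑gγα) = 0 := by linear_combination -(xα * ↑gγβ * (gαβ:ℂ)^2 * (gαγ:ℂ)^2 * (gβγ:ℂ)^3) * F6
    exact (mul_eq_zero.1 h).resolve_left (by simp [hxα, hT, hA, hB, hC])
  have r1 : gβγ - gγβ - gαγ + gαβ = 0 := by exact_mod_cast k1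
  have r2 : gγβ - gβα = 0 := by exact_mod_cast k2
  have r3 : gβα + gαγ - gβγ - gαβ = 0 := by exact_mod_cast k3
  have r4 : gγα + gβγ - gγβ - gαγ = 0 := by exact_mod_cast k4
  have r5 : gβγ - gβα - gγβ + gαβ = 0 := by exact_mod_cast k5
  have r6 : gβα + gαγ - gαβ - gγα = 0 := by exact_mod_cast k6
  refine ⟨by linarith, by linarith, by linarith, by linarith, by linarith⟩
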